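/- Let 0 < γ < δ < 1 and let Λ be a symmetric family of pairwise inequivalent irreps of a compact group G. If there is a probability measure μ on G with a (δ,γ)-spectral gap with respect to Λ, then there is a complex Radon measure ν on G of total variation norm ‖ν‖ ≤ 2/δ such that ν̂(π) = I for every π ∈ Λ and ‖ν̂(ρ)‖ ≤ γ/δ for every irrep ρ of G not equivalent to a member of Λ (including the trivial irrep). -/

import Mathlib

open MeasureTheory Matrix
open scoped ComplexOrder ENNReal

noncomputable section

instance matrixMeasurable {m n : Type*} : MeasurableSpace (Matrix m n ℂ) :=
  inferInstanceAs (MeasurableSpace (m → n → ℂ))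

/-- A (finite-dimensional, continuous, unitary) irreducible representation of a
topological group `G`. -/
structure Irrep (G : Type) [Group G] [TopologicalSpace G] where
  d : ℕ
  toFun : G →* Matrix.unitaryGroup (Fin d) ℂ
  continuous_toFun : Continuous fun g => ((toFun g : Matrix (Fin d) (Fin d) ℂ))
  irreducible : ∀ V : Submodule ℂ (Fin d → ℂ),
    (∀ (g : G), ∀ v ∈ V, Matrix.mulVec ((toFun g : Matrix (Fin d) (Fin d) ℂ)) v ∈ V) →
    V = ⊥ ∨ V = ⊤

namespace Irrep

variable {G : Type} [Group G] [TopologicalSpace G]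

/-- The matrix realization of an irrep. -/
def mat (ρ : Irrep G) (g : G) : Matrix (Fin ρ.d) (Fin ρ.d) ℂ :=
  (ρ.toFun g : Matrix (Fin ρ.d) (Fin ρ.d) ℂ)

lemma continuous_mat (ρ : Irrep G) : Continuous ρ.mat := ρ.continuous_toFun

/-- Unitary equivalence of the irrep `ρ` with a matrix-valued function `F`
(e.g. the matrix realization of another representation). -/
def EquivMat (ρ : Irrep G) {m : ℕ} (F : G → Matrix (Fin m) (Fin m) ℂ) : Prop :=
  ∃ (h : ρ.d = m) (U : Matrix (Fin m) (Fin m) ℂ),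
    U ∈ Matrix.unitaryGroup (Fin m) ℂ ∧
    ∀ g : G, U * (Matrix.reindex (finCongr h) (finCongr h) (ρ.mat g)) = F g * U

/-- Unitary equivalence of two irreps. -/
def Equiv (ρ₁ ρ₂ : Irrep G) : Prop := ρ₁.EquivMat ρ₂.mat

/-- `ρ` is nontrivial if it is not constantly the identity. -/
def IsNontrivial (ρ : Irrep G) : Prop := ∃ g, ρ.toFun g ≠ 1

end Irrep

/-- A family of pairwise inequivalent irreps. -/
def PairwiseInequiv {G : Type} [Group G] [TopologicalSpace G] {ι : Type}
    (π : ι → Irrep G) : Prop :=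
  ∀ i j, i ≠ j → ¬ (π i).Equiv (π j)

/-- A family of irreps is symmetric if the (entrywise) conjugate of each member is
equivalent to a member of the family. -/
def SymmetricFamily {G : Type} [Group G] [TopologicalSpace G] {ι : Type}
    (π : ι → Irrep G) : Prop :=
  ∀ i, ∃ j, (π j).EquivMat (fun g => ((π i).mat g).map (starRingEnd ℂ))

/-- The operator norm (on `ℓ₂`) of a complex matrix. -/
def opNorm {d : ℕ} (A : Matrix (Fin d) (Fin d) ℂ) : ℝ :=
  ‖LinearMap.toContinuousLinearMap (Matrix.toEuclideanLin A)‖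

/-- `tr|a|`, the trace of `(a* a)^{1/2}`, i.e. the sum of the singular values of `a`. -/
def traceAbs {d : ℕ} (A : Matrix (Fin d) (Fin d) ℂ) : ℝ :=
  (((Matrix.posSemidef_conjTranspose_mul_self A).1.eigenvectorUnitary.1 *
      Matrix.diagonal (fun i => ((Real.sqrt ((Matrix.posSemidef_conjTranspose_mul_self A).1.eigenvalues i) : ℝ) : ℂ)) *
      (star (Matrix.posSemidef_conjTranspose_mul_self A).1.eigenvectorUnitary :
        Matrix (Fin d) (Fin d) ℂ)).trace).re

/-- The Fourier coefficient `μ̂(ρ) = ∫ conj (ρ(t)) dμ(t)` of a (positive) measure `μ`. -/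
def fourierP {G : Type} [Group G] [TopologicalSpace G] [MeasurableSpace G]
    (μ : Measure G) (ρ : Irrep G) : Matrix (Fin ρ.d) (Fin ρ.d) ℂ :=
  Matrix.of fun i j => ∫ g, star (ρ.mat g i j) ∂μ

/-- The Fourier coefficient `μ̂(ρ)` of a complex Radon measure on a compact group,
the latter being encoded (via the Riesz representation theorem) as a continuous linear
functional on `C(G, ℂ)`; its total variation norm is then the norm of the functional. -/
def fourierL {G : Type} [Group G] [TopologicalSpace G] [CompactSpace G]
    (μ : C(G, ℂ) →L[ℂ] ℂ) (ρ : Irrep G) : Matrix (Fin ρ.d) (Fin ρ.d) ℂ :=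
  Matrix.of fun i j =>
    μ ⟨fun g => star (ρ.mat g i j), continuous_star.comp (ρ.continuous_mat.matrix_elem i j)⟩

/-- The family `Λ = (π i)` is Sidon with constant `C`. -/
def Sidon {G : Type} [Group G] [TopologicalSpace G] {ι : Type}
    (π : ι → Irrep G) (C : ℝ) : Prop :=
  ∀ (s : Finset ι) (a : ∀ i, Matrix (Fin ((π i).d)) (Fin ((π i).d)) ℂ),
    ∑ i ∈ s, ((π i).d : ℝ) * traceAbs (a i) ≤
      C * ⨆ g : G, ‖∑ i ∈ s, ((π i).d : ℂ) * Matrix.trace ((π i).mat g * a i)‖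

/-- The family `Λ = (π i)` is randomly Sidon with constant `C`, with respect to the
Haar probability measure `m𝒢` on `𝒢 = ∏ U(d_i)`. -/
def RandomlySidonWith {G : Type} [Group G] [TopologicalSpace G] {ι : Type}
    (π : ι → Irrep G) (C : ℝ)
    (m𝒢 : Measure (∀ i, Matrix.unitaryGroup (Fin ((π i).d)) ℂ)) : Prop :=
  ∀ (s : Finset ι) (a : ∀ i, Matrix (Fin ((π i).d)) (Fin ((π i).d)) ℂ),
    ∑ i ∈ s, ((π i).d : ℝ) * traceAbs (a i) ≤
      C * ∫ u, (⨆ g : G,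
        ‖∑ i ∈ s, ((π i).d : ℂ) *
          Matrix.trace ((u i : Matrix (Fin ((π i).d)) (Fin ((π i).d)) ℂ) *
            (π i).mat g * a i)‖) ∂m𝒢

section Auxiliary

open TopologicalSpace

variable {G : Type} [Group G] [TopologicalSpace G] [IsTopologicalGroup G] [CompactSpace G]
  [T2Space G] [MeasurableSpace G] [BorelSpace G]

/-- Normalized Haar probability measure on a compact group. -/
def mHaar (G : Type) [Group G] [TopologicalSpace G] [IsTopologicalGroup G] [CompactSpace G]
    [T2Space G] [MeasurableSpace G] [BorelSpace G] : Measure G :=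
  Measure.haarMeasure (⊤ : PositiveCompacts G)

instance : IsProbabilityMeasure (mHaar G) :=
  ⟨by rw [← PositiveCompacts.coe_top (α := G)]; exact Measure.haarMeasure_self⟩

instance : (mHaar G).IsMulLeftInvariant :=
  Measure.isMulLeftInvariant_haarMeasure _

lemma cont_integrable {f : G → ℂ} (hf : Continuous f) (μ : Measure G) [IsFiniteMeasure μ] :
    Integrable f μ :=
  hf.integrable_of_hasCompactSupport (isClosed_tsupport f).isCompact

/-- integral functional on C(G,ℂ) -/
def intCLM (μ : Measure G) [IsProbabilityMeasure μ] : C(G, ℂ) →L[ℂ] ℂ :=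
  LinearMap.mkContinuous
    { toFun := fun f => ∫ g, f g ∂μ
      map_add' := fun f h => integral_add (cont_integrable f.continuous μ)
        (cont_integrable h.continuous μ)
      map_smul' := fun c f => integral_smul c _ }
    1 (fun f => by
      simp only [one_mul, LinearMap.coe_mk, AddHom.coe_mk]
      calc ‖∫ g, f g ∂μ‖ ≤ ‖f‖ * (μ Set.univ).toReal :=
            norm_integral_le_of_norm_le_const (Filter.Eventually.of_forall fun g => f.norm_coe_le_norm g)
        _ = ‖f‖ := by simp)

lemma intCLM_norm_le (μ : Measure G) [IsProbabilityMeasure μ] : ‖intCLM μ‖ ≤ 1 :=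
  LinearMap.mkContinuous_norm_le _ zero_le_one _

lemma intCLM_apply (μ : Measure G) [IsProbabilityMeasure μ] (f : C(G, ℂ)) :
    intCLM μ f = ∫ g, f g ∂μ := rfl
end Auxiliary
set_option linter.unusedSectionVars false

section Aux2
open TopologicalSpace
variable {G : Type} [Group G] [TopologicalSpace G] [IsTopologicalGroup G] [CompactSpace G]
  [T2Space G] [MeasurableSpace G] [BorelSpace G]

lemma Irrep.mat_mul (ρ : Irrep G) (g h : G) : ρ.mat (g * h) = ρ.mat g * ρ.mat h := by
  simp only [Irrep.mat, _root_.map_mul]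
  rfl

lemma fourierP_haar_eq_zero (ρ : Irrep G) (hnt : ∃ g, ρ.mat g ≠ 1) :
    fourierP (mHaar G) ρ = 0 := by
  set P : Matrix (Fin ρ.d) (Fin ρ.d) ℂ :=
    Matrix.of fun i j => ∫ g, ρ.mat g i j ∂(mHaar G) with hPdef
  have hint : ∀ i j, Integrable (fun g => ρ.mat g i j) (mHaar G) :=
    fun i j => cont_integrable (ρ.continuous_mat.matrix_elem i j) _
  have hP : ∀ h : G, ρ.mat h * P = P := by
    intro h
    ext i j
    have : ∫ g, ρ.mat (h * g) i j ∂(mHaar G) = ∫ g, ρ.mat g i j ∂(mHaar G) :=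
      integral_mul_left_eq_self (fun g => ρ.mat g i j) h
    calc (ρ.mat h * P) i j = ∑ k, ρ.mat h i k * ∫ g, ρ.mat g k j ∂(mHaar G) := by
          simp [Matrix.mul_apply, hPdef]
      _ = ∑ k, ∫ g, ρ.mat h i k * ρ.mat g k j ∂(mHaar G) := by
          refine Finset.sum_congr rfl fun k _ => ?_
          exact (integral_const_mul _ _).symm
      _ = ∫ g, ∑ k, ρ.mat h i k * ρ.mat g k j ∂(mHaar G) := by
          rw [integral_finset_sum]
          exact fun k _ => (hint k j).const_mul _
      _ = ∫ g, ρ.mat (h * g) i j ∂(mHaar G) := by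
          refine integral_congr_ae (Filter.Eventually.of_forall fun g => ?_)
          simp only [ρ.mat_mul, Matrix.mul_apply]
      _ = P i j := this
  -- fixed-vector subspace
  let V : Submodule ℂ (Fin ρ.d → ℂ) :=
    { carrier := {v | ∀ h : G, ρ.mat h *ᵥ v = v}
      add_mem' := fun ha hb h => by rw [Matrix.mulVec_add, ha h, hb h]
      zero_mem' := fun h => by rw [Matrix.mulVec_zero]
      smul_mem' := fun c v hv h => by rw [Matrix.mulVec_smul, hv h] }
  have hVinv : ∀ g : G, ∀ v ∈ V, ρ.mat g *ᵥ v ∈ V := by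
    intro g v hv h
    rw [hv g, hv h]
  rcases ρ.irreducible V hVinv with hV | hV
  · -- columns of P are fixed vectors, hence 0
    have hcol : ∀ j, (fun i => P i j) = 0 := by
      intro j
      have hmem : (fun i => P i j) ∈ V := by
        intro h
        funext i
        have := congrFun (congrFun (congrArg (fun M => (M : Matrix _ _ ℂ)) (hP h)) i) j
        simpa [Matrix.mul_apply, Matrix.mulVec, dotProduct] using
          congrFun (congrFun (hP h) i) j
      rw [hV] at hmem
      exact hmem
    ext i j
    have := congrFun (hcol j) i
    simp only [hPdef, Matrix.of_apply, Matrix.zero_apply] at this ⊢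
    rw [fourierP]
    simp only [Matrix.of_apply]
    rw [show (fun g => star (ρ.mat g i j)) = fun g => (starRingEnd ℂ) (ρ.mat g i j) from rfl,
      integral_conj, this]
    simp
  · -- V = ⊤ : representation trivial, contradiction
    exfalso
    obtain ⟨g, hg⟩ := hnt
    apply hg
    ext i j
    have hfix : ρ.mat g *ᵥ (Pi.single j 1) = Pi.single j 1 := by
      have : (Pi.single j 1 : Fin ρ.d → ℂ) ∈ V := hV ▸ Submodule.mem_top
      exact this g
    have := congrFun hfix i
    simpa [Matrix.mulVec_single, Matrix.one_apply, Pi.single_apply, eq_comm] using this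

end Aux2
section Aux3
open TopologicalSpace
variable {G : Type} [Group G] [TopologicalSpace G] [IsTopologicalGroup G] [CompactSpace G]
  [T2Space G] [MeasurableSpace G] [BorelSpace G]

lemma Irrep.equiv_refl (ρ : Irrep G) : ρ.Equiv ρ := by
  refine ⟨rfl, 1, one_mem _, fun g => ?_⟩
  simp

lemma fourierP_probab_trivial (μ : Measure G) [IsProbabilityMeasure μ] (ρ : Irrep G)
    (h : ∀ g, ρ.mat g = 1) : fourierP μ ρ = 1 := by
  ext i j
  simp [fourierP, h, Matrix.one_apply, apply_ite (star : ℂ → ℂ)]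

lemma opNorm_zero {d : ℕ} : opNorm (0 : Matrix (Fin d) (Fin d) ℂ) = 0 := by
  have : LinearMap.toContinuousLinearMap (Matrix.toEuclideanLin (0 : Matrix (Fin d) (Fin d) ℂ)) = 0 := by
    ext v
    simp
  rw [opNorm, this, norm_zero]

lemma opNorm_smul {d : ℕ} (c : ℂ) (A : Matrix (Fin d) (Fin d) ℂ) :
    opNorm (c • A) = ‖c‖ * opNorm A := by
  have : LinearMap.toContinuousLinearMap (Matrix.toEuclideanLin (c • A)) =
      c • LinearMap.toContinuousLinearMap (Matrix.toEuclideanLin A) := by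
    ext v
    simp
  rw [opNorm, this, opNorm]
  exact norm_smul c (LinearMap.toContinuousLinearMap (Matrix.toEuclideanLin A))

lemma fourierL_smul_sub {G : Type} [Group G] [TopologicalSpace G] [CompactSpace G]
    (c : ℂ) (μ₁ μ₂ : C(G, ℂ) →L[ℂ] ℂ) (ρ : Irrep G) :
    fourierL (c • (μ₁ - μ₂)) ρ = c • (fourierL μ₁ ρ - fourierL μ₂ ρ) := by
  ext i j
  simp [fourierL]

lemma fourierL_intCLM (μ : Measure G) [IsProbabilityMeasure μ] (ρ : Irrep G) :
    fourierL (intCLM μ) ρ = fourierP μ ρ := by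
  ext i j
  rfl

end Aux3
set_option maxHeartbeats 1000000 in
/-- If a probability measure `μ` on a compact group `G` has a `(δ,γ)`-spectral gap with
respect to a symmetric family `Λ` of pairwise inequivalent irreps (`0 < γ < δ < 1`), then
there is a complex Radon measure `ν` (encoded as a continuous linear functional on
`C(G,ℂ)`) of total variation norm at most `2/δ` with `ν̂(π) = I` for all `π ∈ Λ` and
`‖ν̂(ρ)‖ ≤ γ/δ` for every irrep `ρ` not equivalent to a member of `Λ` (including the
trivial one). -/
theorem isolated_implies_peak
    (G : Type) [Group G] [TopologicalSpace G] [IsTopologicalGroup G] [CompactSpace G]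
    [T2Space G] [MeasurableSpace G] [BorelSpace G]
    (ι : Type) (π : ι → Irrep G)
    (hpair : PairwiseInequiv π) (hsym : SymmetricFamily π)
    (γ δ : ℝ) (hγ : 0 < γ) (hγδ : γ < δ) (hδ : δ < 1)
    (μ : Measure G) [IsProbabilityMeasure μ]
    (hgap₁ : ∀ ρ : Irrep G, (∃ i, ρ.Equiv (π i)) →
      fourierP μ ρ = (δ : ℂ) • (1 : Matrix (Fin ρ.d) (Fin ρ.d) ℂ))
    (hgap₂ : ∀ ρ : Irrep G, ρ.IsNontrivial → (¬ ∃ i, ρ.Equiv (π i)) →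
      opNorm (fourierP μ ρ) ≤ γ) :
    ∃ ν : C(G, ℂ) →L[ℂ] ℂ, ‖ν‖ ≤ 2 / δ ∧
      (∀ i, fourierL ν (π i) = (1 : Matrix (Fin ((π i).d)) (Fin ((π i).d)) ℂ)) ∧
      ∀ ρ : Irrep G, (¬ ∃ i, ρ.Equiv (π i)) → opNorm (fourierL ν ρ) ≤ γ / δ := by
  have hδ0 : (0:ℝ) < δ := hγ.trans hγδ
  have hδC : (δ:ℂ) ≠ 0 := by exact_mod_cast hδ0.ne'
  have hnormδ : ‖((δ:ℂ))⁻¹‖ = δ⁻¹ := by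
    rw [norm_inv, Complex.norm_real, Real.norm_of_nonneg hδ0.le]
  set ν : C(G, ℂ) →L[ℂ] ℂ := ((δ:ℂ))⁻¹ • (intCLM μ - intCLM (mHaar G)) with hν
  have hfour : ∀ ρ : Irrep G,
      fourierL ν ρ = ((δ:ℂ))⁻¹ • (fourierP μ ρ - fourierP (mHaar G) ρ) := by
    intro ρ
    rw [hν, fourierL_smul_sub, fourierL_intCLM, fourierL_intCLM]
  refine ⟨ν, ?_, ?_, ?_⟩
  · calc ‖ν‖ = ‖((δ:ℂ))⁻¹‖ * ‖intCLM μ - intCLM (mHaar G)‖ := norm_smul ((δ:ℂ))⁻¹ (intCLM μ - intCLM (mHaar G))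
      _ ≤ δ⁻¹ * (‖intCLM μ‖ + ‖intCLM (mHaar G)‖) := by
          rw [hnormδ]
          exact mul_le_mul_of_nonneg_left (norm_sub_le _ _) (inv_nonneg.mpr hδ0.le)
      _ ≤ δ⁻¹ * 2 := by
          have h1 := intCLM_norm_le μ
          have h2 := intCLM_norm_le (mHaar G)
          have h3 : (0:ℝ) ≤ δ⁻¹ := inv_nonneg.mpr hδ0.le
          nlinarith
      _ = 2 / δ := by rw [div_eq_mul_inv, mul_comm]
  · intro i
    by_cases htr : ∀ g, (π i).mat g = 1
    · rcases Nat.eq_zero_or_pos (π i).d with hd | hd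
      · have : IsEmpty (Fin ((π i).d)) := by rw [hd]; infer_instance
        exact Subsingleton.elim _ _
      · exfalso
        have h1 : fourierP μ (π i) = 1 := fourierP_probab_trivial μ (π i) htr
        have h2 := hgap₁ (π i) ⟨i, Irrep.equiv_refl _⟩
        rw [h1] at h2
        set k : Fin ((π i).d) := ⟨0, hd⟩
        have h3 : (1 : Matrix (Fin ((π i).d)) (Fin ((π i).d)) ℂ) k k
            = ((δ:ℂ) • (1 : Matrix (Fin ((π i).d)) (Fin ((π i).d)) ℂ)) k k := by rw [← h2]
        simp only [Matrix.one_apply_eq, Matrix.smul_apply, smul_eq_mul, mul_one] at h3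
        have : δ = 1 := by exact_mod_cast h3.symm
        linarith
    · push_neg at htr
      rw [hfour, hgap₁ (π i) ⟨i, Irrep.equiv_refl _⟩, fourierP_haar_eq_zero _ htr,
        sub_zero, smul_smul, inv_mul_cancel₀ hδC, one_smul]
  · intro ρ hnot
    by_cases htr : ∀ g, ρ.mat g = 1
    · rw [hfour, fourierP_probab_trivial μ ρ htr, fourierP_probab_trivial (mHaar G) ρ htr,
        sub_self, smul_zero, opNorm_zero]
      positivity
    · push_neg at htr
      have hnt : ρ.IsNontrivial := by
        obtain ⟨g, hg⟩ := htr
        exact ⟨g, fun h1 => hg (by rw [Irrep.mat, h1]; rfl)⟩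
      have hb := hgap₂ ρ hnt hnot
      rw [hfour, fourierP_haar_eq_zero _ htr, sub_zero, opNorm_smul, hnormδ,
        div_eq_mul_inv, mul_comm (γ:ℝ)]
      exact mul_le_mul_of_nonneg_left hb (inv_nonneg.mpr hδ0.le)

end
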